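/- Let T ∈ (0,∞], let b : [0,T) → ℝ and σ : [0,T) → (0,∞) be continuous, and let α ∈ ℝ. Suppose lim_{t↑T} I_α(t) = ∞, lim_{t↑T} (b(t)/σ(t)²)·exp{2α∫₀ᵗ b(w) dw} = C for some C ∈ ℝ with C ≠ 0, and either α = 0, or α and C have the same sign. Then lim_{t↑T} ∫₀ᵗ σ(s)² ds = ∞. -/

import Mathlib

open MeasureTheory Filter Set Topology intervalIntegral

/-- The filter of real numbers `t` approaching `T ∈ (0,∞]` from below
(`atTop` when `T = ⊤`, `𝓝[<] T` when `T` is finite). -/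
noncomputable def upFilter (T : EReal) : Filter ℝ :=
  Filter.comap (fun x : ℝ => (x : EReal)) (𝓝[<] T)

/-- The Fisher information
`I_α(t) = ∫₀ᵗ (b(s)²/σ(s)²) · (∫₀ˢ σ(u)² · exp{2α ∫ᵤˢ b(v) dv} du) ds`. -/
noncomputable def fisherInfo (b σ : ℝ → ℝ) (α : ℝ) (t : ℝ) : ℝ :=
  ∫ s in (0:ℝ)..t, (b s) ^ 2 / (σ s) ^ 2 *
    ∫ u in (0:ℝ)..s, (σ u) ^ 2 * Real.exp (2 * α * ∫ v in u..s, b v)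

lemma upFilter_exists {T : EReal} (hT : 0 < T) {s : Set ℝ} (hs : s ∈ upFilter T) :
    ∃ a : ℝ, (a : EReal) < T ∧ ∀ t : ℝ, a < t → (t : EReal) < T → t ∈ s := by
  obtain ⟨u, hu, hsub⟩ := Filter.mem_comap.1 hs
  obtain ⟨l, hl, hIoo⟩ := (mem_nhdsLT_iff_exists_Ioo_subset' hT).1 hu
  have hl' : max l 0 < T := max_lt hl hT
  have hne_top : max l 0 ≠ ⊤ := fun h => absurd hl' (by simp [h, top_le_iff, lt_irrefl])
  have hne_bot : max l 0 ≠ ⊥ := by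
    intro h
    exact absurd (le_max_right l 0) (by simp [h])
  refine ⟨(max l 0).toReal, by rwa [EReal.coe_toReal hne_top hne_bot], fun t hat htT => ?_⟩
  apply hsub
  apply hIoo
  constructor
  · calc l ≤ max l 0 := le_max_left _ _
      _ = ((max l 0).toReal : EReal) := (EReal.coe_toReal hne_top hne_bot).symm
      _ < (t : EReal) := EReal.coe_lt_coe_iff.2 hat
  · exact htT

lemma upFilter_eventually {T : EReal} {a : ℝ} (ha : (a : EReal) < T) :
    ∀ᶠ t : ℝ in upFilter T, a < t ∧ (t : EReal) < T := by
  have : Ioo (a : EReal) T ∈ 𝓝[<] T := Ioo_mem_nhdsLT ha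
  have h2 : (fun x : ℝ => (x : EReal)) ⁻¹' (Ioo (a : EReal) T) ∈ upFilter T :=
    Filter.preimage_mem_comap this
  refine Filter.mem_of_superset h2 fun t ht => ?_
  exact ⟨EReal.coe_lt_coe_iff.1 ht.1, ht.2⟩

lemma exists_real_lt_upper {T : EReal} {x : ℝ} (hx : (x : EReal) < T) :
    ∃ y : ℝ, x < y ∧ (y : EReal) < T := by
  obtain ⟨y, hy1, hy2⟩ := EReal.lt_iff_exists_real_btwn.1 hx
  exact ⟨y, EReal.coe_lt_coe_iff.1 hy1, hy2⟩


/-- If `I_α(t) → ∞`, condition (2.6) holds with limit `C ≠ 0`, and either `α = 0` or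
`α` and `C` have the same sign, then `∫₀ᵗ σ(s)² ds → ∞` as `t ↑ T`. -/
theorem sigma_sq_integral_atTop (T : EReal) (hT : 0 < T)
    (b σ : ℝ → ℝ) (α : ℝ) (C : ℝ) (hC : C ≠ 0)
    (hb : ContinuousOn b {t : ℝ | 0 ≤ t ∧ (t : EReal) < T})
    (hσ : ContinuousOn σ {t : ℝ | 0 ≤ t ∧ (t : EReal) < T})
    (hσpos : ∀ t : ℝ, 0 ≤ t → (t : EReal) < T → 0 < σ t)
    (hI : Tendsto (fisherInfo b σ α) (upFilter T) atTop)
    (hlim : Tendsto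
      (fun t : ℝ => b t / (σ t) ^ 2 * Real.exp (2 * α * ∫ w in (0:ℝ)..t, b w))
      (upFilter T) (𝓝 C))
    (hsign : α = 0 ∨ (0 < α ∧ 0 < C) ∨ (α < 0 ∧ C < 0)) :
    Tendsto (fun t : ℝ => ∫ s in (0:ℝ)..t, (σ s) ^ 2) (upFilter T) atTop := by
  set D : Set ℝ := {t : ℝ | 0 ≤ t ∧ (t : EReal) < T} with hD
  set B : ℝ → ℝ := fun t => ∫ v in (0:ℝ)..t, b v with hBdef
  set K : ℝ → ℝ := fun t => ∫ u in (0:ℝ)..t, (σ u) ^ 2 * Real.exp (-(2 * α * B u)) with hKdef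
  set S : ℝ → ℝ := fun t => ∫ s in (0:ℝ)..t, (σ s) ^ 2 with hSdef
  set g : ℝ → ℝ := fun t => b t / (σ t) ^ 2 * Real.exp (2 * α * B t) with hgdef
  have hIccD : ∀ {t : ℝ}, 0 ≤ t → (t : EReal) < T → Icc (0:ℝ) t ⊆ D := by
    intro t h0 ht x hx
    exact ⟨hx.1, lt_of_le_of_lt (EReal.coe_le_coe_iff.2 hx.2) ht⟩
  have hint : ∀ (f : ℝ → ℝ), ContinuousOn f D → ∀ u s : ℝ, 0 ≤ u → u ≤ s →
      (s : EReal) < T → IntervalIntegrable f volume u s := by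
    intro f hf u s h0 hus hsT
    apply ContinuousOn.intervalIntegrable
    apply hf.mono
    rw [uIcc_of_le hus]
    exact fun x hx => hIccD (h0.trans hus) hsT ⟨h0.trans hx.1, hx.2⟩
  have hbint : ∀ u s : ℝ, 0 ≤ u → u ≤ s → (s : EReal) < T →
      IntervalIntegrable b volume u s := hint b hb
  have hσ2cont : ContinuousOn (fun u => (σ u) ^ 2) D := (hσ.pow 2)
  have hσ2int : ∀ u s : ℝ, 0 ≤ u → u ≤ s → (s : EReal) < T →
      IntervalIntegrable (fun u => (σ u) ^ 2) volume u s := hint _ hσ2cont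
  -- continuity / inner-integral identity pack for each fixed t < T
  have pack : ∀ t : ℝ, 0 ≤ t → (t : EReal) < T →
      ContinuousOn B (Icc 0 t) ∧ ContinuousOn K (Icc 0 t) ∧
      (∀ s ∈ Icc (0:ℝ) t,
        (∫ u in (0:ℝ)..s, (σ u) ^ 2 * Real.exp (2 * α * ∫ v in u..s, b v))
          = Real.exp (2 * α * B s) * K s) := by
    intro t h0 htT
    have hIcc := hIccD h0 htT
    have huIcc : uIcc (0:ℝ) t = Icc 0 t := uIcc_of_le h0
    have hBcont : ContinuousOn B (Icc 0 t) := by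
      rw [← huIcc]
      exact intervalIntegral.continuousOn_primitive_interval
        ((hb.mono (huIcc ▸ hIcc)).integrableOn_compact (huIcc ▸ isCompact_Icc))
    have hKintcont : ContinuousOn (fun u => (σ u) ^ 2 * Real.exp (-(2 * α * B u))) (Icc 0 t) :=
      (hσ2cont.mono hIcc).mul
        (Real.continuous_exp.comp_continuousOn ((continuousOn_const.mul hBcont).neg))
    have hKcont : ContinuousOn K (Icc 0 t) := by
      rw [← huIcc]
      exact intervalIntegral.continuousOn_primitive_interval
        (hKintcont.integrableOn_compact (huIcc ▸ isCompact_Icc) |>.mono_set (by rw [huIcc]))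
    refine ⟨hBcont, hKcont, ?_⟩
    intro s hs
    have hsT : (s : EReal) < T := lt_of_le_of_lt (EReal.coe_le_coe_iff.2 hs.2) htT
    rw [hKdef]
    rw [← intervalIntegral.integral_const_mul]
    apply intervalIntegral.integral_congr
    intro u hu
    rw [uIcc_of_le hs.1] at hu
    have hint_ub : (∫ v in u..s, b v) = B s - B u := by
      rw [hBdef]
      exact (intervalIntegral.integral_interval_sub_left
        (hbint 0 s le_rfl hs.1 hsT) (hbint 0 u le_rfl hu.1
          (lt_of_le_of_lt (EReal.coe_le_coe_iff.2 (hu.2.trans hs.2)) htT))).symm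
    simp only
    rw [hint_ub, show 2 * α * (B s - B u) = 2 * α * B s + -(2 * α * B u) by ring,
      Real.exp_add]
    ring
  -- integrability of the fisher integrand on [0,t]
  have hFint : ∀ t : ℝ, 0 ≤ t → (t : EReal) < T →
      IntervalIntegrable (fun s => (b s) ^ 2 / (σ s) ^ 2 *
        ∫ u in (0:ℝ)..s, (σ u) ^ 2 * Real.exp (2 * α * ∫ v in u..s, b v)) volume 0 t := by
    intro t h0 htT
    obtain ⟨hBcont, hKcont, hJ⟩ := pack t h0 htT
    have hIcc := hIccD h0 htT
    have hcont2 : ContinuousOn (fun s => (b s) ^ 2 / (σ s) ^ 2 *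
        (Real.exp (2 * α * B s) * K s)) (Icc 0 t) := by
      apply ContinuousOn.mul
      · apply ContinuousOn.div ((hb.mono hIcc).pow 2) (hσ2cont.mono hIcc)
        intro x hx
        exact pow_ne_zero 2 (hσpos x (hIcc hx).1 (hIcc hx).2).ne'
      · exact (Real.continuous_exp.comp_continuousOn (continuousOn_const.mul hBcont)).mul hKcont
    apply ContinuousOn.intervalIntegrable
    rw [uIcc_of_le h0]
    exact hcont2.congr fun s hs => by rw [hJ s hs]
  -- choose t₀
  have hhalfC : (0:ℝ) < |C| / 2 := by positivity
  have hev : ∀ᶠ t : ℝ in upFilter T,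
      |b t / (σ t) ^ 2 * Real.exp (2 * α * ∫ w in (0:ℝ)..t, b w) - C| < |C| / 2 := by
    have := Metric.tendsto_nhds.1 hlim (|C| / 2) hhalfC
    filter_upwards [this] with t ht
    simpa [Real.dist_eq] using ht
  obtain ⟨a₁, ha₁T, ha₁⟩ := upFilter_exists hT hev
  obtain ⟨t₀, ht₀gt, ht₀T⟩ := exists_real_lt_upper
    (show ((max a₁ 0 : ℝ) : EReal) < T by
      rcases max_cases a₁ 0 with ⟨h, _⟩ | ⟨h, _⟩ <;> rw [h]
      exacts [ha₁T, hT])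
  have ht₀pos : (0:ℝ) < t₀ := (le_max_right a₁ 0).trans_lt ht₀gt
  have ht₀a₁ : a₁ < t₀ := (le_max_left a₁ 0).trans_lt ht₀gt
  -- good points
  have hgood : ∀ v : ℝ, t₀ ≤ v → (v : EReal) < T → |g v - C| < |C| / 2 :=
    fun v hv hvT => ha₁ v (ht₀a₁.trans_le hv) hvT
  -- sign fact : 0 ≤ 2 * α * b v  at good points
  have hsignb : ∀ v : ℝ, t₀ ≤ v → (v : EReal) < T → 0 ≤ 2 * α * b v := by
    intro v hv hvT
    have hv0 : (0:ℝ) ≤ v := ht₀pos.le.trans hv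
    have hσv : 0 < (σ v) ^ 2 := pow_pos (hσpos v hv0 hvT) 2
    have hexp : 0 < Real.exp (2 * α * B v) := Real.exp_pos _
    have hd := abs_lt.1 (hgood v hv hvT)
    rcases hsign with h0 | ⟨hα, hCpos⟩ | ⟨hα, hCneg⟩
    · simp [h0]
    · have habs : |C| = C := abs_of_pos hCpos
      have hgv : 0 < g v := by rw [habs] at hd; linarith [hd.1]
      have hfrac : 0 < b v / (σ v) ^ 2 := by
        by_contra h
        push_neg at h
        have := mul_nonpos_of_nonpos_of_nonneg h hexp.le
        rw [hgdef] at hgv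
        simp only at hgv
        linarith
      have hbv : 0 < b v := by
        have := mul_pos hfrac hσv
        rwa [div_mul_cancel₀ _ hσv.ne'] at this
      positivity
    · have habs : |C| = -C := abs_of_neg hCneg
      have hgv : g v < 0 := by rw [habs] at hd; linarith [hd.2]
      have hfrac : b v / (σ v) ^ 2 < 0 := by
        by_contra h
        push_neg at h
        have := mul_nonneg h hexp.le
        rw [hgdef] at hgv
        simp only at hgv
        linarith
      have hbv : b v < 0 := by
        have := mul_neg_of_neg_of_pos hfrac hσv
        rwa [div_mul_cancel₀ _ hσv.ne'] at this
      nlinarith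
  -- exp bound
  set M : ℝ := Real.exp (-(2 * α * B t₀)) with hMdef
  have hMpos : 0 < M := Real.exp_pos _
  have hexpbd : ∀ s : ℝ, t₀ ≤ s → (s : EReal) < T → Real.exp (-(2 * α * B s)) ≤ M := by
    intro s hs hsT
    have hBs : B s - B t₀ = ∫ v in t₀..s, b v := by
      rw [hBdef]
      exact intervalIntegral.integral_interval_sub_left
        (hbint 0 s le_rfl (ht₀pos.le.trans hs) hsT) (hbint 0 t₀ le_rfl ht₀pos.le ht₀T)
    have hnn : 0 ≤ ∫ v in t₀..s, 2 * α * b v := by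
      apply intervalIntegral.integral_nonneg hs
      intro u hu
      exact hsignb u hu.1 (lt_of_le_of_lt (EReal.coe_le_coe_iff.2 hu.2) hsT)
    rw [intervalIntegral.integral_const_mul] at hnn
    have : 0 ≤ 2 * α * (B s - B t₀) := by rw [hBs]; exact hnn
    rw [hMdef]
    apply Real.exp_le_exp.2
    linarith
  -- g squared bound
  have hgsq : ∀ v : ℝ, t₀ ≤ v → (v : EReal) < T → (g v) ^ 2 ≤ 4 * C ^ 2 := by
    intro v hv hvT
    have hd := abs_lt.1 (hgood v hv hvT)
    have h1 : (g v - C) ^ 2 ≤ C ^ 2 / 4 := by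
      have := sq_lt_sq' hd.1 hd.2
      rw [div_pow, sq_abs] at this
      linarith
    nlinarith [sq_nonneg (g v - 2 * C)]
  -- nonnegativity facts
  have hSnonneg : ∀ t : ℝ, 0 ≤ t → 0 ≤ S t :=
    fun t h0 => intervalIntegral.integral_nonneg h0 (fun u _ => sq_nonneg _)
  have hKnonneg : ∀ t : ℝ, 0 ≤ t → 0 ≤ K t :=
    fun t h0 => intervalIntegral.integral_nonneg h0 (fun u _ => by positivity)
  have hKt₀nonneg : 0 ≤ K t₀ := hKnonneg t₀ ht₀pos.le
  -- integrability of K's integrand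
  have hKintint : ∀ t : ℝ, 0 ≤ t → (t : EReal) < T →
      IntervalIntegrable (fun u => (σ u) ^ 2 * Real.exp (-(2 * α * B u))) volume 0 t := by
    intro t h0 htT
    obtain ⟨hBcont, _, _⟩ := pack t h0 htT
    apply ContinuousOn.intervalIntegrable
    rw [uIcc_of_le h0]
    exact (hσ2cont.mono (hIccD h0 htT)).mul
      (Real.continuous_exp.comp_continuousOn ((continuousOn_const.mul hBcont).neg))
  -- S difference
  have hSsub : ∀ u t : ℝ, 0 ≤ u → u ≤ t → (t : EReal) < T →
      S t - S u = ∫ s in u..t, (σ s) ^ 2 := by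
    intro u t h0 hut htT
    rw [hSdef]
    exact intervalIntegral.integral_interval_sub_left
      (hσ2int 0 t le_rfl (h0.trans hut) htT)
      (hσ2int 0 u le_rfl h0 (lt_of_le_of_lt (EReal.coe_le_coe_iff.2 hut) htT))
  have hSmono : ∀ u t : ℝ, 0 ≤ u → u ≤ t → (t : EReal) < T → S u ≤ S t := by
    intro u t h0 hut htT
    have h1 : 0 ≤ ∫ s in u..t, (σ s) ^ 2 :=
      intervalIntegral.integral_nonneg hut (fun x _ => sq_nonneg _)
    have := hSsub u t h0 hut htT
    linarith
  -- the key estimate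
  have key : ∀ t : ℝ, t₀ ≤ t → (t : EReal) < T →
      fisherInfo b σ α t ≤ fisherInfo b σ α t₀
        + (4 * C ^ 2 * M * K t₀) * S t + (4 * C ^ 2 * M * M) * S t ^ 2 := by
    intro t htt₀ htT
    have h0t : (0:ℝ) ≤ t := ht₀pos.le.trans htt₀
    have hSt0 : 0 ≤ S t := hSnonneg t h0t
    have hSt₀0 : 0 ≤ S t₀ := hSnonneg t₀ ht₀pos.le
    obtain ⟨hBcont, hKcont, hJ⟩ := pack t h0t htT
    have huIcc : uIcc t₀ t = Icc t₀ t := uIcc_of_le htt₀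
    have hsubIcc : uIcc t₀ t ⊆ uIcc 0 t := by
      rw [huIcc, uIcc_of_le h0t]
      exact Icc_subset_Icc ht₀pos.le le_rfl
    -- split the fisher integral
    have hF1 := hFint t₀ ht₀pos.le ht₀T
    have hF2 := (hFint t h0t htT).mono_set hsubIcc
    have hsplit := intervalIntegral.integral_add_adjacent_intervals hF1 hF2
    -- pointwise bound on [t₀, t]
    set c : ℝ := 4 * C ^ 2 * M * (K t₀ + M * S t) with hcdef
    have hc : 0 ≤ c := by
      rw [hcdef]
      have : 0 ≤ K t₀ + M * S t := by positivity
      positivity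
    have hptwise : ∀ s ∈ Icc t₀ t, (b s) ^ 2 / (σ s) ^ 2 *
        (∫ u in (0:ℝ)..s, (σ u) ^ 2 * Real.exp (2 * α * ∫ v in u..s, b v))
          ≤ c * (σ s) ^ 2 := by
      intro s hs
      have hs0 : (0:ℝ) ≤ s := ht₀pos.le.trans hs.1
      have hsT : (s : EReal) < T := lt_of_le_of_lt (EReal.coe_le_coe_iff.2 hs.2) htT
      have hσs : 0 < σ s := hσpos s hs0 hsT
      have hident : (b s) ^ 2 / (σ s) ^ 2 *
          (∫ u in (0:ℝ)..s, (σ u) ^ 2 * Real.exp (2 * α * ∫ v in u..s, b v))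
          = (g s) ^ 2 * ((σ s) ^ 2 * Real.exp (-(2 * α * B s))) * K s := by
        rw [hJ s ⟨hs0, hs.2⟩, hgdef]
        simp only
        rw [Real.exp_neg]
        field_simp
      rw [hident]
      -- bound K s
      have hKs0 : 0 ≤ K s := hKnonneg s hs0
      have hKsbd : K s ≤ K t₀ + M * S t := by
        have hKss : IntervalIntegrable (fun u => (σ u) ^ 2 * Real.exp (-(2 * α * B u)))
            volume t₀ s := ((hKintint s hs0 hsT).mono_set (by
          rw [uIcc_of_le hs.1, uIcc_of_le hs0]
          exact Icc_subset_Icc ht₀pos.le le_rfl))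
        have hKsub : K s - K t₀ = ∫ u in t₀..s, (σ u) ^ 2 * Real.exp (-(2 * α * B u)) := by
          rw [hKdef]
          exact intervalIntegral.integral_interval_sub_left
            (hKintint s hs0 hsT) (hKintint t₀ ht₀pos.le ht₀T)
        have hbound : (∫ u in t₀..s, (σ u) ^ 2 * Real.exp (-(2 * α * B u)))
            ≤ ∫ u in t₀..s, M * (σ u) ^ 2 := by
          apply intervalIntegral.integral_mono_on hs.1 hKss
          · exact (hσ2int t₀ s ht₀pos.le hs.1 hsT).const_mul M
          · intro u hu
            have huT : (u : EReal) < T :=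
              lt_of_le_of_lt (EReal.coe_le_coe_iff.2 (hu.2.trans hs.2)) htT
            have hb2 := hexpbd u hu.1 huT
            have h3 := mul_le_mul_of_nonneg_left hb2 (sq_nonneg (σ u))
            linarith
        rw [intervalIntegral.integral_const_mul] at hbound
        have hSs : S s - S t₀ = ∫ u in t₀..s, (σ u) ^ 2 :=
          hSsub t₀ s ht₀pos.le hs.1 hsT
        have hSst : S s ≤ S t := hSmono s t hs0 hs.2 htT
        have h4 : M * (S s - S t₀) ≤ M * S t :=
          mul_le_mul_of_nonneg_left (by linarith) hMpos.le
        rw [← hSs] at hbound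
        linarith
      -- combine
      have h1 := hgsq s hs.1 hsT
      have h2 := hexpbd s hs.1 hsT
      have hE : 0 ≤ Real.exp (-(2 * α * B s)) := (Real.exp_pos _).le
      have hstep : (g s) ^ 2 * ((σ s) ^ 2 * Real.exp (-(2 * α * B s))) * K s
          ≤ (4 * C ^ 2) * ((σ s) ^ 2 * M) * (K t₀ + M * S t) := by
        apply mul_le_mul _ hKsbd hKs0 _
        · apply mul_le_mul h1 (mul_le_mul_of_nonneg_left h2 (sq_nonneg _))
            (by positivity) (by positivity)
        · exact mul_nonneg (by positivity) (mul_nonneg (sq_nonneg _) hMpos.le)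
      calc (g s) ^ 2 * ((σ s) ^ 2 * Real.exp (-(2 * α * B s))) * K s
          ≤ (4 * C ^ 2) * ((σ s) ^ 2 * M) * (K t₀ + M * S t) := hstep
        _ = c * (σ s) ^ 2 := by rw [hcdef]; ring
    -- integrate the bound
    have hmono : (∫ s in t₀..t, (b s) ^ 2 / (σ s) ^ 2 *
        ∫ u in (0:ℝ)..s, (σ u) ^ 2 * Real.exp (2 * α * ∫ v in u..s, b v))
        ≤ ∫ s in t₀..t, c * (σ s) ^ 2 := by
      apply intervalIntegral.integral_mono_on htt₀ hF2
        ((hσ2int 0 t le_rfl h0t htT).mono_set hsubIcc |>.const_mul c) hptwise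
    rw [intervalIntegral.integral_const_mul] at hmono
    have hSdiff : S t - S t₀ = ∫ s in t₀..t, (σ s) ^ 2 := hSsub t₀ t ht₀pos.le htt₀ htT
    have hfe : ∀ x : ℝ, fisherInfo b σ α x = ∫ s in (0:ℝ)..x, (b s) ^ 2 / (σ s) ^ 2 *
        ∫ u in (0:ℝ)..s, (σ u) ^ 2 * Real.exp (2 * α * ∫ v in u..s, b v) := fun _ => rfl
    rw [hfe t, hfe t₀]
    have h5 : c * (S t - S t₀) ≤ c * S t :=
      mul_le_mul_of_nonneg_left (by linarith) hc
    have h6 : c * S t = (4 * C ^ 2 * M * K t₀) * S t + (4 * C ^ 2 * M * M) * S t ^ 2 := by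
      rw [hcdef]; ring
    rw [← hSdiff] at hmono
    linarith
  -- conclude
  rw [tendsto_atTop]
  intro R
  set R' : ℝ := max R 0 with hR'def
  have hA₂ : 0 ≤ 4 * C ^ 2 * M * K t₀ := by positivity
  have hA₃ : 0 ≤ 4 * C ^ 2 * M * M := by positivity
  have hIbig := (tendsto_atTop.1 hI)
    (fisherInfo b σ α t₀ + (4 * C ^ 2 * M * K t₀) * R' + (4 * C ^ 2 * M * M) * R' ^ 2 + 1)
  filter_upwards [upFilter_eventually ht₀T, hIbig] with t ht hIt
  obtain ⟨htt₀, htT⟩ := ht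
  have hkey := key t htt₀.le htT
  have hSt0 : 0 ≤ S t := hSnonneg t (ht₀pos.le.trans htt₀.le)
  by_contra h
  push_neg at h
  have hStR : S t ≤ R' := le_trans h.le (le_max_left R 0)
  have hsq : S t ^ 2 ≤ R' ^ 2 := by nlinarith
  have h2 : (4 * C ^ 2 * M * K t₀) * S t ≤ (4 * C ^ 2 * M * K t₀) * R' :=
    mul_le_mul_of_nonneg_left hStR hA₂
  have h3 : (4 * C ^ 2 * M * M) * S t ^ 2 ≤ (4 * C ^ 2 * M * M) * R' ^ 2 :=
    mul_le_mul_of_nonneg_left hsq hA₃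
  linarith
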